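/- Let G be a minimally bad graph and O a bad connected order of G. If P is a flat path of G, then the vertex of P that is largest with respect to O is an end of P. -/

import Mathlib

open Classical in
noncomputable def greedyStep {V : Type*} (G : SimpleGraph V) (f : V → ℕ) (v : V) : V → ℕ :=
  fun u => if u = v then sInf {c : ℕ | 1 ≤ c ∧ ∀ w, G.Adj v w → f w ≠ c} else f u

noncomputable def greedyFrom {V : Type*} (G : SimpleGraph V) (f : V → ℕ) (l : List V) : V → ℕ :=
  l.foldl (greedyStep G) f

noncomputable def greedy {V : Type*} (G : SimpleGraph V) (l : List V) : V → ℕ :=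
  greedyFrom G (fun _ => 0) l

open Classical in
noncomputable def greedyStart2 {V : Type*} (G : SimpleGraph V) : List V → V → ℕ
  | [] => fun _ => 0
  | v :: rest => greedyFrom G (fun u => if u = v then 2 else 0) rest

noncomputable def chi {V : Type*} [Fintype V] (G : SimpleGraph V) : ℕ :=
  sInf {n : ℕ | G.Colorable n}

open Classical in
noncomputable def idx {V : Type*} (l : List V) (v : V) : ℕ := l.idxOf v

noncomputable def maxIdx {V : Type*} (l : List V) (A : Set V) : ℕ := sSup (idx l '' A)
noncomputable def minIdx {V : Type*} (l : List V) (A : Set V) : ℕ := sInf (idx l '' A)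

def IsConnOrder {V : Type*} (G : SimpleGraph V) (l : List V) : Prop :=
  l.Nodup ∧ (∀ v : V, v ∈ l) ∧
    ∀ i : Fin l.length, 0 < i.1 → ∃ j : Fin l.length, j.1 < i.1 ∧ G.Adj (l.get j) (l.get i)

def GoodOrder {V : Type*} [Fintype V] (G : SimpleGraph V) (l : List V) : Prop :=
  ∀ v : V, greedy G l v ≤ chi G

def Good {V : Type*} [Fintype V] (G : SimpleGraph V) : Prop :=
  ∀ s : Finset V, (G.induce (↑s : Set V)).Connected →
    ∀ l : List ↥(↑s : Set V), IsConnOrder (G.induce (↑s : Set V)) l →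
      GoodOrder (G.induce (↑s : Set V)) l

def BadOrder {V : Type*} [Fintype V] (G : SimpleGraph V) (l : List V) : Prop :=
  IsConnOrder G l ∧ ¬ GoodOrder G l

def MinimallyBad {V : Type*} [Fintype V] (G : SimpleGraph V) : Prop :=
  ¬ Good G ∧ ∀ s : Finset V, s ≠ Finset.univ →
    (G.induce (↑s : Set V)).Connected → Good (G.induce (↑s : Set V))

def IsInducedPath {V : Type*} (G : SimpleGraph V) (P : List V) : Prop :=
  P.Nodup ∧ ∀ i j : Fin P.length,
    G.Adj (P.get i) (P.get j) ↔ (i.1 + 1 = j.1 ∨ j.1 + 1 = i.1)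

def IsFlatPath {V : Type*} (G : SimpleGraph V) (P : List V) : Prop :=
  IsInducedPath G P ∧
    ∀ i : Fin P.length, 0 < i.1 → i.1 + 1 < P.length → (G.neighborSet (P.get i)).ncard = 2

def WellOrderedPath {V : Type*} (l P : List V) : Prop :=
  P.Pairwise (fun u v => idx l u < idx l v) ∨ P.Pairwise (fun u v => idx l v < idx l u)

def IsMaxFlatPath {V : Type*} (G : SimpleGraph V) (P : List V) : Prop :=
  IsFlatPath G P ∧ ∀ h : P ≠ [],
    (G.neighborSet (P.head h)).ncard ≠ 2 ∧ (G.neighborSet (P.getLast h)).ncard ≠ 2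

def ClawFree {V : Type*} (G : SimpleGraph V) : Prop :=
  ∀ a b c d : V, G.Adj a b → G.Adj a c → G.Adj a d → b ≠ c → b ≠ d → c ≠ d →
    G.Adj b c ∨ G.Adj b d ∨ G.Adj c d

def IsHole {V : Type*} (G : SimpleGraph V) (C : List V) : Prop :=
  4 ≤ C.length ∧ C.Nodup ∧
    ∀ i j : Fin C.length, G.Adj (C.get i) (C.get j) ↔
      ((i.1 + 1) % C.length = j.1 ∨ (j.1 + 1) % C.length = i.1)

def GemFree {V : Type*} (G : SimpleGraph V) : Prop :=
  ¬ ∃ a b c d e : V, G.Adj a b ∧ G.Adj b c ∧ G.Adj c d ∧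
    ¬ G.Adj a c ∧ ¬ G.Adj a d ∧ ¬ G.Adj b d ∧
    G.Adj e a ∧ G.Adj e b ∧ G.Adj e c ∧ G.Adj e d


section Aux

variable {V : Type*}

lemma greedyStep_ne (G : SimpleGraph V) (f : V → ℕ) {u v : V} (h : u ≠ v) :
    greedyStep G f v u = f u := by
  simp [greedyStep, h]

lemma greedyStep_self (G : SimpleGraph V) (f : V → ℕ) (v : V) :
    greedyStep G f v v = sInf {c : ℕ | 1 ≤ c ∧ ∀ w, G.Adj v w → f w ≠ c} := by
  simp [greedyStep]

lemma greedyFrom_cons (G : SimpleGraph V) (f : V → ℕ) (a : V) (m : List V) :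
    greedyFrom G f (a :: m) = greedyFrom G (greedyStep G f a) m := rfl

lemma greedyFrom_append (G : SimpleGraph V) (f : V → ℕ) (m₁ m₂ : List V) :
    greedyFrom G f (m₁ ++ m₂) = greedyFrom G (greedyFrom G f m₁) m₂ :=
  List.foldl_append

lemma greedyFrom_not_mem (G : SimpleGraph V) (f : V → ℕ) {m : List V} {v : V} (h : v ∉ m) :
    greedyFrom G f m v = f v := by
  induction m generalizing f with
  | nil => rfl
  | cons a t ih =>
    have h1 : v ≠ a := fun hv => h (hv ▸ List.mem_cons_self)
    have h2 : v ∉ t := fun hv => h (List.mem_cons_of_mem a hv)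
    rw [greedyFrom_cons, ih _ h2, greedyStep_ne G f h1]

lemma nodup_indexOf_getElem [DecidableEq V] {l : List V} (h : l.Nodup)
    (k : ℕ) (hk : k < l.length) : l.idxOf (l[k]) = k := by
  have h1 : l[k] ∈ l := List.getElem_mem hk
  have h2 : l.idxOf (l[k]) < l.length := List.idxOf_lt_length_iff.mpr h1
  exact h.getElem_inj_iff.mp (List.getElem_idxOf h2)

lemma exists_good_color (a b : ℕ) : ∃ c, 1 ≤ c ∧ c ≤ 3 ∧ c ≠ a ∧ c ≠ b := by
  by_cases h1 : a = 1 ∨ b = 1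
  · by_cases h2 : a = 2 ∨ b = 2
    · rcases h1 with h1 | h1 <;> rcases h2 with h2 | h2 <;> exact ⟨3, by omega⟩
    · push_neg at h2; exact ⟨2, by omega⟩
  · push_neg at h1; exact ⟨1, by omega⟩

lemma sublist_indexOf_lt [DecidableEq V] {m l : List V} (hs : m.Sublist l) (hnd : l.Nodup) :
    ∀ {a b : V}, a ∈ m → b ∈ m → l.idxOf a < l.idxOf b → m.idxOf a < m.idxOf b := by
  induction hs with
  | slnil => intro a b ha; simp at ha
  | @cons m' l' c hs ih =>
    intro a b ha hb hab
    have hndl := List.nodup_cons.mp hnd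
    have hac : a ≠ c := by rintro rfl; exact hndl.1 (hs.subset ha)
    have hbc : b ≠ c := by rintro rfl; exact hndl.1 (hs.subset hb)
    rw [List.idxOf_cons_ne _ (Ne.symm hac), List.idxOf_cons_ne _ (Ne.symm hbc)] at hab
    exact ih hndl.2 ha hb (by omega)
  | @cons_cons m' l' c hs ih =>
    intro a b ha hb hab
    have hndl := List.nodup_cons.mp hnd
    by_cases hac : a = c
    · subst hac
      have hba : b ≠ a := by rintro rfl; omega
      rw [List.idxOf_cons_self, List.idxOf_cons_ne _ (Ne.symm hba)]
      omega
    · by_cases hbc : b = c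
      · subst hbc
        rw [List.idxOf_cons_self, List.idxOf_cons_ne _ (Ne.symm hac)] at hab
        omega
      · have ha' : a ∈ m' := by
          rcases List.mem_cons.mp ha with h | h
          · exact absurd h hac
          · exact h
        have hb' : b ∈ m' := by
          rcases List.mem_cons.mp hb with h | h
          · exact absurd h hbc
          · exact h
        rw [List.idxOf_cons_ne _ (Ne.symm hac), List.idxOf_cons_ne _ (Ne.symm hbc)] at hab ⊢
        have := ih hndl.2 ha' hb' (by omega)
        omega

lemma connOrder_connected (G : SimpleGraph V) (m : List V)
    (hm : IsConnOrder G m) (hlen : 0 < m.length) : G.Connected := by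
  rw [SimpleGraph.connected_iff]
  refine ⟨?_, ⟨m[0]⟩⟩
  have key : ∀ k, ∀ hk : k < m.length, G.Reachable (m[0]'hlen) (m[k]) := by
    intro k
    induction k using Nat.strong_induction_on with
    | _ k IH =>
      intro hk
      rcases Nat.eq_zero_or_pos k with h0 | hpos
      · subst h0; exact SimpleGraph.Reachable.refl _
      · obtain ⟨j, hjlt, hadj⟩ := hm.2.2 ⟨k, hk⟩ hpos
        simp only [List.get_eq_getElem] at hadj
        exact (IH j.1 hjlt j.2).trans hadj.reachable
  intro x y
  obtain ⟨a, ha, hax⟩ := List.mem_iff_getElem.mp (hm.2.1 x)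
  obtain ⟨b, hb, hby⟩ := List.mem_iff_getElem.mp (hm.2.1 y)
  subst hax; subst hby
  exact (key a ha).symm.trans (key b hb)

lemma greedy_le_two (G : SimpleGraph V) (m : List V)
    (hcol : G.Colorable 2) (hm : IsConnOrder G m) (hlen : 0 < m.length) :
    ∀ x, greedy G m x ≤ 2 := by
  classical
  obtain ⟨C⟩ := hcol
  set c : V → ℕ := fun x => if C x = C (m[0]'hlen) then 1 else 2 with hc
  have hc1 : ∀ x, 1 ≤ c x := by
    intro x; by_cases h : C x = C (m[0]'hlen) <;> simp [hc, h]
  have hc2 : ∀ x, c x ≤ 2 := by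
    intro x; by_cases h : C x = C (m[0]'hlen) <;> simp [hc, h]
  have fin2 : ∀ p q r : Fin 2, p ≠ q → r ≠ q → p = r := by decide
  have hcadj : ∀ x y, G.Adj x y → c x ≠ c y := by
    intro x y hxy
    have hne : C x ≠ C y := C.valid hxy
    by_cases h : C x = C (m[0]'hlen)
    · have h2 : ¬ (C y = C (m[0]'hlen)) := fun hy => hne (h.trans hy.symm)
      simp [hc, h, h2]
    · have h2 : C y = C (m[0]'hlen) := fin2 _ _ _ (Ne.symm hne) (fun hh => h hh.symm)
      simp [hc, h, h2]
  have inv : ∀ k, k ≤ m.length → ∀ x,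
      greedyFrom G (fun _ => 0) (m.take k) x = if x ∈ m.take k then c x else 0 := by
    intro k
    induction k with
    | zero => intro _ x; simp [greedyFrom]
    | succ k ih =>
      intro hk x
      have hklt : k < m.length := hk
      have ihx := ih (le_of_lt hklt)
      have htake : m.take (k+1) = m.take k ++ [m[k]] := by
        rw [← List.take_concat_get hklt, List.concat_eq_append]
      rw [htake, greedyFrom_append]
      set g := greedyFrom G (fun _ => 0) (m.take k) with hg
      have hstep : greedyFrom G g [m[k]] x = greedyStep G g (m[k]) x := rfl
      rw [hstep]
      by_cases hxa : x = m[k]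
      · have hnotmem : (m[k]) ∉ m.take k := by
          intro hmem
          obtain ⟨j, hj, hjx⟩ := List.mem_take_iff_getElem.mp hmem
          have hjk : j = k := hm.1.getElem_inj_iff.mp hjx
          omega
        have hmem' : x ∈ m.take k ++ [m[k]] := by
          rw [hxa]; exact List.mem_append_right _ (List.mem_singleton_self _)
        rw [if_pos hmem', hxa]
        rw [greedyStep_self]
        set S := {cc : ℕ | 1 ≤ cc ∧ ∀ y, G.Adj (m[k]) y → g y ≠ cc} with hS
        have hmemS : c (m[k]) ∈ S := by
          refine ⟨hc1 _, ?_⟩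
          intro y hy
          rw [ihx y]
          by_cases hmy : y ∈ m.take k
          · rw [if_pos hmy]
            exact fun h => (hcadj _ _ hy) h.symm
          · rw [if_neg hmy]
            have := hc1 (m[k]); omega
        have hSle : sInf S ≤ c (m[k]) := Nat.sInf_le hmemS
        have hSmem : sInf S ∈ S := Nat.sInf_mem ⟨_, hmemS⟩
        have h1le : 1 ≤ sInf S := hSmem.1
        have hcases : c (m[k]) = 1 ∨ c (m[k]) = 2 := by
          by_cases h : C (m[k]) = C (m[0]'hlen) <;> simp [hc, h]
        rcases hcases with hca | hca
        · omega
        · -- need sInf S = 2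
          have hk0 : 0 < k := by
            by_contra hk0
            have hkz : k = 0 := by omega
            subst hkz
            simp [hc] at hca
          obtain ⟨j, hjlt, hadj⟩ := hm.2.2 ⟨k, hklt⟩ hk0
          simp only [List.get_eq_getElem] at hadj
          set y := m[j.1] with hy
          have hymem : y ∈ m.take k := by
            rw [List.mem_take_iff_getElem]
            exact ⟨j.1, lt_min hjlt j.2, rfl⟩
          have hgy : g y = c y := by rw [ihx y, if_pos hymem]
          have hCy : C y ≠ C (m[k]) := C.valid hadj
          have hCk : C (m[k]) ≠ C (m[0]'hlen) := by
            intro hh; simp [hc, hh] at hca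
          have hCy0 : C y = C (m[0]'hlen) := fin2 _ _ _ hCy (fun hh => hCk hh.symm)
          have hcy1 : c y = 1 := by simp [hc, hCy0]
          have h1notS : (1 : ℕ) ∉ S := by
            intro h1S
            exact h1S.2 y hadj.symm (by rw [hgy, hcy1])
          have : sInf S ≠ 1 := fun hh => h1notS (hh ▸ hSmem)
          omega
      · rw [greedyStep_ne G g hxa, ihx x]
        have hiff : (x ∈ m.take k ++ [m[k]]) = (x ∈ m.take k) := by
          rw [eq_iff_iff]
          simp only [List.mem_append, List.mem_singleton, hxa, or_false]
        simp only [hiff]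
  intro x
  have hfin := inv m.length le_rfl x
  rw [List.take_length] at hfin
  show greedyFrom G (fun _ => 0) m x ≤ 2
  rw [hfin]
  split
  · exact hc2 x
  · omega

lemma greedy_transfer {W : Type*} (G : SimpleGraph V) (G' : SimpleGraph W) (v : V)
    (φ : ∀ x : V, x ≠ v → W)
    (hadj : ∀ x hx y hy, G'.Adj (φ x hx) (φ y hy) ↔ G.Adj x y)
    (hinj : ∀ x hx y hy, φ x hx = φ y hy → x = y)
    (hsurj : ∀ w : W, ∃ x hx, φ x hx = w) :
    ∀ (m : List V) (hm : ∀ x ∈ m, x ≠ v) (f : V → ℕ) (f' : W → ℕ),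
      (∀ x (hx : x ≠ v), f x = f' (φ x hx)) →
      (∀ x ∈ m, G.Adj v x → f v = 0) →
      ∀ x (hx : x ≠ v),
        greedyFrom G f m x = greedyFrom G' f' (m.pmap φ hm) (φ x hx) := by
  intro m
  induction m with
  | nil => intro _ f f' hagree _ x hx; exact hagree x hx
  | cons a t ih =>
    intro hm f f' hagree hsafe x hx
    have hav : a ≠ v := hm a (List.mem_cons_self)
    simp only [List.pmap]
    rw [greedyFrom_cons, greedyFrom_cons]
    refine ih _ (greedyStep G f a) (greedyStep G' f' (φ a hav)) ?_ ?_ x hx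
    · intro y hy
      by_cases hya : y = a
      · subst hya
        rw [greedyStep_self, greedyStep_self]
        congr 1
        ext cc
        simp only [Set.mem_setOf_eq]
        constructor
        · rintro ⟨h1, h2⟩
          refine ⟨h1, ?_⟩
          intro w' hw'
          obtain ⟨z, hz, rfl⟩ := hsurj w'
          rw [← hagree z hz]
          exact h2 z ((hadj _ _ _ _).mp hw')
        · rintro ⟨h1, h2⟩
          refine ⟨h1, ?_⟩
          intro z hz
          by_cases hzv : z = v
          · subst hzv
            have h0 : f z = 0 := hsafe y (List.mem_cons_self) hz.symm
            rw [h0]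
            omega
          · rw [hagree z hzv]
            exact h2 _ ((hadj _ _ _ _).mpr hz)
      · rw [greedyStep_ne G f hya,
            greedyStep_ne G' f' (fun h => hya (hinj _ _ _ _ h)), hagree y hy]
    · intro y hyt hadjv
      rw [greedyStep_ne G f (Ne.symm hav)]
      exact hsafe y (List.mem_cons_of_mem a hyt) hadjv

end Aux

theorem stmt12 {V : Type*} [Fintype V] (G : SimpleGraph V) (l : List V)
    (hmin : MinimallyBad G) (hbad : BadOrder G l)
    (P : List V) (hP : IsFlatPath G P) :
    ∀ i (h : i < P.length),
      (∀ j (hj : j < P.length), idx l (P.get ⟨j, hj⟩) ≤ idx l (P.get ⟨i, h⟩)) →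
      i = 0 ∨ i + 1 = P.length := by
  classical
  intro i hilen hmax
  by_contra hcon
  push_neg at hcon
  obtain ⟨hi0, hiend⟩ := hcon
  obtain ⟨hconn, hnotgood⟩ := hbad
  obtain ⟨hnodupl, hmeml, hconn3⟩ := hconn
  have hi1 : 0 < i := Nat.pos_of_ne_zero hi0
  have hi2 : i + 1 < P.length := lt_of_le_of_ne (Nat.succ_le_of_lt hilen) hiend
  have him1 : i - 1 < P.length := by omega
  set v := P.get ⟨i, hilen⟩ with hv
  set u := P.get ⟨i-1, him1⟩ with hu
  set w := P.get ⟨i+1, hi2⟩ with hw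
  have huv : G.Adj u v := (hP.1.2 ⟨i-1, him1⟩ ⟨i, hilen⟩).mpr (Or.inl (by show i - 1 + 1 = i; omega))
  have hwv : G.Adj w v := (hP.1.2 ⟨i+1, hi2⟩ ⟨i, hilen⟩).mpr (Or.inr rfl)
  have hgetne : ∀ (a b : Fin P.length), a.1 ≠ b.1 → P.get a ≠ P.get b := by
    intro a b hne h
    exact hne (congrArg Fin.val (hP.1.1.get_inj_iff.mp h))
  have huvne : u ≠ v := hgetne _ _ (by show i - 1 ≠ i; omega)
  have hwvne : w ≠ v := hgetne _ _ (by show i + 1 ≠ i; omega)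
  have huwne : u ≠ w := hgetne _ _ (by show i - 1 ≠ i + 1; omega)
  have hnbr : G.neighborSet v = {u, w} := by
    have hsub : ({u, w} : Set V) ⊆ G.neighborSet v := by
      rintro z (rfl | rfl)
      · exact huv.symm
      · exact hwv.symm
    refine (Set.eq_of_subset_of_ncard_le hsub ?_ (Set.toFinite _)).symm
    rw [hP.2 ⟨i, hilen⟩ hi1 hi2, Set.ncard_pair huwne]
  have hnbr' : ∀ z, G.Adj v z → z = u ∨ z = w := by
    intro z hz
    have hz2 : z ∈ G.neighborSet v := hz
    rw [hnbr] at hz2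
    simpa using hz2
  have hmemv : v ∈ l := hmeml v
  have hmemu : u ∈ l := hmeml u
  have hmemw : w ∈ l := hmeml w
  have hidxu : l.idxOf u < l.idxOf v := by
    have h1 : l.idxOf u ≤ l.idxOf v := hmax (i-1) him1
    have h2 : l.idxOf u ≠ l.idxOf v :=
      fun h => huvne ((List.idxOf_inj hmemu).mp h)
    omega
  have hidxw : l.idxOf w < l.idxOf v := by
    have h1 : l.idxOf w ≤ l.idxOf v := hmax (i+1) hi2
    have h2 : l.idxOf w ≠ l.idxOf v :=
      fun h => hwvne ((List.idxOf_inj hmemw).mp h)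
    omega
  set n := l.idxOf v with hn
  have hnlen : n < l.length := List.idxOf_lt_length_iff.mpr hmemv
  have hgetn : l[n]'hnlen = v := List.getElem_idxOf hnlen
  set l₁ := l.take n with hl₁
  set l₂ := l.drop (n+1) with hl₂
  have hdec : l = l₁ ++ v :: l₂ := by
    rw [hl₁, hl₂, ← hgetn, List.getElem_cons_drop, List.take_append_drop]
  have hlpos : 0 < l.length := List.length_pos_of_mem hmemv
  have hl₁len : l₁.length = n := by
    rw [hl₁, List.length_take]
    exact inf_eq_left.mpr (le_of_lt hnlen)
  have hidx_getElem : ∀ (k) (hk : k < l.length), l.idxOf (l[k]'hk) = k :=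
    fun k hk => nodup_indexOf_getElem hnodupl k hk
  have hvl₁ : v ∉ l₁ := by
    intro hmem
    rw [hl₁] at hmem
    obtain ⟨j, hj, hjv⟩ := List.mem_take_iff_getElem.mp hmem
    have hjlen : j < l.length := lt_of_lt_of_le hj inf_le_right
    have hjn : j = n := hnodupl.getElem_inj_iff.mp (hjv.trans hgetn.symm)
    have hj2 : j < n := lt_of_lt_of_le hj inf_le_left
    omega
  have hvl₂ : v ∉ l₂ := by
    intro hmem
    rw [hl₂] at hmem
    obtain ⟨j, hj, hjv⟩ := List.mem_iff_getElem.mp hmem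
    rw [List.getElem_drop] at hjv
    have hjn : n + 1 + j = n := hnodupl.getElem_inj_iff.mp (hjv.trans hgetn.symm)
    omega
  have hidxl₂ : ∀ x ∈ l₂, n < l.idxOf x := by
    intro x hx
    rw [hl₂] at hx
    obtain ⟨j, hj, hjx⟩ := List.mem_iff_getElem.mp hx
    rw [List.getElem_drop] at hjx
    have hlen2 : n + 1 + j < l.length := by
      have h5 := List.length_drop (i := n+1) (l := l)
      omega
    rw [← hjx, hidx_getElem _ hlen2]
    omega
  have humem₁ : u ∈ l₁ := by
    rw [hl₁, List.mem_take_iff_getElem]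
    exact ⟨l.idxOf u, lt_min hidxu (List.idxOf_lt_length_iff.mpr hmemu),
      List.getElem_idxOf _⟩
  have hn0 : 0 < n := by omega
  have hl₁0 : 0 < l₁.length := by omega
  have hnoadj₂ : ∀ x ∈ l₂, ¬ G.Adj v x := by
    intro x hx hadj
    rcases hnbr' x hadj with rfl | rfl
    · have := hidxl₂ _ hx; omega
    · have := hidxl₂ _ hx; omega
  have hchiset : {k : ℕ | G.Colorable k}.Nonempty := ⟨Fintype.card V, G.colorable_of_fintype⟩
  have hchimem : G.Colorable (chi G) := Nat.sInf_mem hchiset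
  have hchi2 : 2 ≤ chi G := by
    by_contra hcon2
    push_neg at hcon2
    have hcol1 : G.Colorable 1 := hchimem.mono (by omega)
    obtain ⟨C⟩ := hcol1
    exact (C.valid huv) (Subsingleton.elim _ _)
  rcases eq_or_lt_of_le hchi2 with hchieq | hchi3
  · refine hnotgood ?_
    intro x
    have hle2 := greedy_le_two G l (show G.Colorable 2 by rw [hchieq]; exact hchimem)
      ⟨hnodupl, hmeml, hconn3⟩ hlpos x
    omega
  · set s : Finset V := Finset.univ.erase v with hs
    have hsne : s ≠ Finset.univ := by
      intro h
      have hv' : v ∈ s := h ▸ Finset.mem_univ v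
      rw [hs] at hv'
      exact (Finset.mem_erase.mp hv').1 rfl
    have hmems : ∀ x : V, x ≠ v → x ∈ (↑s : Set V) := by
      intro x hx
      rw [hs]; simp [hx]
    have hmems' : ∀ x : V, x ∈ (↑s : Set V) → x ≠ v := by
      intro x hx
      rw [hs] at hx; simp at hx; exact hx
    set Hind := (G.induce (↑s : Set V)).induce
        (↑(Finset.univ : Finset ↥(↑s : Set V)) : Set ↥(↑s : Set V)) with hHind
    set φ : ∀ x : V, x ≠ v → ↥(↑(Finset.univ : Finset ↥(↑s : Set V)) : Set ↥(↑s : Set V)) :=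
      fun x hx => ⟨⟨x, hmems x hx⟩, by simp⟩ with hφ
    have hφadj : ∀ x hx y hy, Hind.Adj (φ x hx) (φ y hy) ↔ G.Adj x y := fun _ _ _ _ => Iff.rfl
    have hφinj : ∀ x hx y hy, φ x hx = φ y hy → x = y := by
      intro x hx y hy h
      exact congrArg (fun z => z.1.1) h
    have hφsurj : ∀ z, ∃ x hx, φ x hx = z := by
      intro z
      refine ⟨z.1.1, hmems' _ z.1.2, ?_⟩
      apply Subtype.ext; apply Subtype.ext; rfl
    set m := l₁ ++ l₂ with hm
    have hmsub : m.Sublist l := by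
      rw [hdec, hm]
      exact (List.sublist_cons_self v l₂).append_left l₁
    have hmnd : m.Nodup := hnodupl.sublist hmsub
    have hmne : ∀ x ∈ m, x ≠ v := by
      intro x hx
      rw [hm] at hx
      rcases List.mem_append.mp hx with h | h
      · intro he; subst he; exact hvl₁ h
      · intro he; subst he; exact hvl₂ h
    have hmmem : ∀ x : V, x ≠ v → x ∈ m := by
      intro x hx
      have hxl : x ∈ l := hmeml x
      rw [hdec] at hxl
      rw [hm]
      rcases List.mem_append.mp hxl with h | h
      · exact List.mem_append_left _ h
      · rcases List.mem_cons.mp h with h | h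
        · exact absurd h hx
        · exact List.mem_append_right _ h
    have hmpos : 0 < m.length := List.length_pos_of_mem (hmmem u huvne)
    set l' := m.pmap φ hmne with hl'
    have hl'len : l'.length = m.length := by
      rw [hl']; exact List.length_pmap
    have hl'nd : l'.Nodup := List.Nodup.pmap (fun a ha b hb h => hφinj a ha b hb h) hmnd
    have hl'mem : ∀ y, y ∈ l' := by
      intro y
      rw [hl', List.mem_pmap]
      refine ⟨y.1.1, hmmem _ (hmems' _ y.1.2), ?_⟩
      apply Subtype.ext; apply Subtype.ext; rfl
    have hmidx_getElem : ∀ (k) (hk : k < m.length), m.idxOf (m[k]'hk) = k :=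
      fun k hk => nodup_indexOf_getElem hmnd k hk
    have hm0 : m[0]'hmpos = l[0]'hlpos := by
      have e1 : m[0]'hmpos = l₁[0]'hl₁0 := by
        rw [List.getElem_of_eq hm]
        exact List.getElem_append_left hl₁0
      have e2 : l[0]'hlpos = l₁[0]'hl₁0 := by
        rw [List.getElem_of_eq hdec]
        exact List.getElem_append_left hl₁0
      rw [e1, e2]
    have hl'conn : IsConnOrder Hind l' := by
      refine ⟨hl'nd, hl'mem, ?_⟩
      intro iF hiFpos
      have hiF' : iF.1 < m.length := by rw [← hl'len]; exact iF.2
      have hxv : (m[iF.1]'hiF') ≠ v := hmne _ (List.getElem_mem hiF')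
      have hxm : (m[iF.1]'hiF') ∈ m := List.getElem_mem hiF'
      have hxl : (m[iF.1]'hiF') ∈ l := hmsub.subset hxm
      have hmidx : m.idxOf (m[iF.1]'hiF') = iF.1 := hmidx_getElem iF.1 hiF'
      have hplen : l.idxOf (m[iF.1]'hiF') < l.length := List.idxOf_lt_length_iff.mpr hxl
      have hppos : 0 < l.idxOf (m[iF.1]'hiF') := by
        rcases Nat.eq_zero_or_pos (l.idxOf (m[iF.1]'hiF')) with h0 | h
        · exfalso
          obtain ⟨k, hk, hkx⟩ : ∃ k, ∃ hk : k < l.length, l[k]'hk = m[iF.1]'hiF' :=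
            ⟨_, hplen, List.getElem_idxOf hplen⟩
          have hik : l.idxOf (m[iF.1]'hiF') = k := by
            rw [← hkx]; exact hidx_getElem k hk
          have hk0 : k = 0 := by omega
          subst hk0
          have hx0 : m[0]'hmpos = m[iF.1]'hiF' := by rw [hm0]; exact hkx
          have := hmnd.getElem_inj_iff.mp hx0
          omega
        · exact h
      obtain ⟨jF, hjlt, hadj⟩ := hconn3 ⟨l.idxOf (m[iF.1]'hiF'), hplen⟩ hppos
      have hjlt' : jF.1 < l.idxOf (m[iF.1]'hiF') := hjlt
      have hadj2 : G.Adj (l[jF.1]'jF.2) (m[iF.1]'hiF') := by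
        have hget : l.get ⟨l.idxOf (m[iF.1]'hiF'), hplen⟩ = m[iF.1]'hiF' :=
          List.getElem_idxOf hplen
        rw [← hget]
        exact hadj
      have hyidx : l.idxOf (l[jF.1]'jF.2) = jF.1 := hidx_getElem jF.1 jF.2
      have hyv : (l[jF.1]'jF.2) ≠ v := by
        intro he
        have hjn : jF.1 = n := by
          rw [← hyidx, he, ← hn]
        have hadj' : G.Adj v (m[iF.1]'hiF') := he ▸ hadj2
        have hidxx : l.idxOf (m[iF.1]'hiF') < n := by
          rcases hnbr' _ hadj' with h | h
          · rw [h]; exact hidxu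
          · rw [h]; exact hidxw
        omega
      have hym : (l[jF.1]'jF.2) ∈ m := hmmem _ hyv
      have hmyx : m.idxOf (l[jF.1]'jF.2) < m.idxOf (m[iF.1]'hiF') :=
        sublist_indexOf_lt hmsub hnodupl hym hxm (by omega)
      have hmylen2 : m.idxOf (l[jF.1]'jF.2) < m.length := List.idxOf_lt_length_iff.mpr hym
      have hmylen : m.idxOf (l[jF.1]'jF.2) < l'.length := by
        rw [hl'len]; omega
      have hgetiF : l'.get iF = φ (m[iF.1]'hiF') hxv := by
        have h1 : l'.get iF = l'[iF.1]'iF.2 := rfl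
        rw [h1, List.getElem_of_eq hl', List.getElem_pmap]
      have hgety : l'.get ⟨m.idxOf (l[jF.1]'jF.2), hmylen⟩ = φ (l[jF.1]'jF.2) hyv := by
        have h1 : l'.get ⟨m.idxOf (l[jF.1]'jF.2), hmylen⟩
            = l'[m.idxOf (l[jF.1]'jF.2)]'hmylen := rfl
        rw [h1, List.getElem_of_eq hl', List.getElem_pmap]
        apply Subtype.ext; apply Subtype.ext
        exact List.getElem_idxOf hmylen2
      refine ⟨⟨m.idxOf (l[jF.1]'jF.2), hmylen⟩,
        by show m.idxOf (l[jF.1]'jF.2) < iF.1; omega, ?_⟩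
      rw [hgety, hgetiF]
      exact (hφadj _ hyv _ hxv).mpr hadj2
    have hl'pos : 0 < l'.length := by rw [hl'len]; exact hmpos
    have hHindconn : Hind.Connected := connOrder_connected Hind l' hl'conn hl'pos
    have hHconn : (G.induce (↑s : Set V)).Connected := by
      rw [SimpleGraph.connected_iff] at hHindconn ⊢
      refine ⟨?_, ⟨⟨u, hmems u huvne⟩⟩⟩
      intro a b
      have hr := hHindconn.1 ⟨a, by simp⟩ ⟨b, by simp⟩
      exact hr.map ⟨Subtype.val, fun {p q} h => h⟩
    have hGood : Good (G.induce (↑s : Set V)) := hmin.2 s hsne hHconn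
    have hgo : GoodOrder Hind l' := hGood Finset.univ hHindconn l' hl'conn
    have hcolind : Hind.Colorable (chi G) := by
      obtain ⟨C⟩ := hchimem
      exact ⟨⟨fun y => C y.1.1, fun {a b} hab => C.valid hab⟩⟩
    have hchile : chi Hind ≤ chi G := Nat.sInf_le hcolind
    have hgv : greedy G l v ≤ 3 := by
      show greedyFrom G (fun _ => 0) l v ≤ 3
      conv_lhs => rw [hdec]
      rw [greedyFrom_append, greedyFrom_cons, greedyFrom_not_mem G _ hvl₂, greedyStep_self]
      obtain ⟨cc, hcc1, hcc3, hccu, hccw⟩ :=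
        exists_good_color (greedyFrom G (fun _ => 0) l₁ u) (greedyFrom G (fun _ => 0) l₁ w)
      refine le_trans (Nat.sInf_le ⟨hcc1, ?_⟩) hcc3
      intro z hz
      rcases hnbr' z hz with rfl | rfl
      · exact fun h => hccu h.symm
      · exact fun h => hccw h.symm
    have hmne₁ : ∀ x ∈ l₁, x ≠ v := fun x hx => hmne x (by rw [hm]; exact List.mem_append_left _ hx)
    have hmne₂ : ∀ x ∈ l₂, x ≠ v := fun x hx => hmne x (by rw [hm]; exact List.mem_append_right _ hx)
    have hsplit : l' = l₁.pmap φ hmne₁ ++ l₂.pmap φ hmne₂ := by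
      rw [hl']
      exact List.pmap_append hmne
    have hph1 : ∀ x (hx : x ≠ v),
        greedyFrom G (fun _ => 0) l₁ x
          = greedyFrom Hind (fun _ => 0) (l₁.pmap φ hmne₁) (φ x hx) :=
      greedy_transfer G Hind v φ hφadj hφinj hφsurj l₁ hmne₁ _ _
        (fun _ _ => rfl) (fun _ _ _ => rfl)
    have hph3 : ∀ x (hx : x ≠ v),
        greedyFrom G (greedyStep G (greedyFrom G (fun _ => 0) l₁) v) l₂ x
          = greedyFrom Hind (greedyFrom Hind (fun _ => 0) (l₁.pmap φ hmne₁))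
              (l₂.pmap φ hmne₂) (φ x hx) := by
      refine greedy_transfer G Hind v φ hφadj hφinj hφsurj l₂ hmne₂ _ _ ?_ ?_
      · intro x hx
        rw [greedyStep_ne G _ hx]
        exact hph1 x hx
      · intro x hx2 hadj
        exact absurd hadj (hnoadj₂ x hx2)
    refine hnotgood ?_
    intro x
    by_cases hxv : x = v
    · subst hxv
      exact le_trans hgv (by omega)
    · have htr : greedy G l x = greedy Hind l' (φ x hxv) := by
        show greedyFrom G (fun _ => 0) l x = greedyFrom Hind (fun _ => 0) l' (φ x hxv)
        conv_lhs => rw [hdec]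
        conv_rhs => rw [hsplit]
        rw [greedyFrom_append, greedyFrom_cons, greedyFrom_append]
        exact hph3 x hxv
      rw [htr]
      exact le_trans (hgo (φ x hxv)) hchile
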